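/- Let f_m, g : (0,1] → ℝ be integrable with ∫_{(j−1)/m}^{j/m} f_m = ∫_{(j−1)/m}^{j/m} g for all j = 1,…,m, where f_m is constant on each interval ((j−1)/m, j/m]. Then for every real t, |∫₀¹ (e^{it f_m(u)} − e^{it g(u)}) du| ≤ (t²/2) ∫₀¹ (f_m(u) − g(u))² du. -/

import Mathlib

open MeasureTheory Complex

lemma aux_norm_exp_sub_one (x : ℝ) : ‖Complex.exp (x * Complex.I) - 1‖ ≤ |x| := by
  rw [Complex.exp_mul_I]
  have h : Complex.cos x + Complex.sin x * Complex.I - 1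
      = Complex.ofReal (Real.cos x - 1) + Complex.ofReal (Real.sin x) * Complex.I := by
    push_cast; ring
  rw [h, Complex.norm_add_mul_I]
  have hcos := Real.one_sub_sq_div_two_le_cos (x := x)
  have hs : (Real.cos x - 1) ^ 2 + Real.sin x ^ 2 ≤ x ^ 2 := by
    have := Real.sin_sq_add_cos_sq x
    nlinarith [Real.neg_one_le_cos x, Real.cos_le_one x]
  calc Real.sqrt ((Real.cos x - 1) ^ 2 + Real.sin x ^ 2) ≤ Real.sqrt (x ^ 2) :=
        Real.sqrt_le_sqrt hs
    _ = |x| := Real.sqrt_sq_eq_abs x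

lemma aux_exp_taylor (x : ℝ) :
    ‖Complex.exp (x * Complex.I) - 1 - x * Complex.I‖ ≤ x ^ 2 / 2 := by
  have key : ∀ y : ℝ, 0 ≤ y → ‖Complex.exp (y * Complex.I) - 1 - y * Complex.I‖ ≤ y ^ 2 / 2 := by
    intro y hy
    have hderiv : ∀ s : ℝ, HasDerivAt (fun s : ℝ => Complex.exp (s * Complex.I) - 1 - s * Complex.I)
        ((Complex.exp (s * Complex.I) - 1) * Complex.I) s := by
      intro s
      have h1 : HasDerivAt (fun z : ℂ => Complex.exp (z * Complex.I) - 1 - z * Complex.I)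
          (Complex.exp ((s : ℂ) * Complex.I) * Complex.I - Complex.I) s := by
        have := (((hasDerivAt_id (s : ℂ)).mul_const Complex.I).cexp).sub_const 1
        have h2 := this.sub ((hasDerivAt_id (s : ℂ)).mul_const Complex.I)
        simp only [id_eq, one_mul] at h2
        exact h2
      have := h1.comp_ofReal
      convert this using 1
      ring
    have hFTC := intervalIntegral.integral_eq_sub_of_hasDerivAt
      (f := fun s : ℝ => Complex.exp (s * Complex.I) - 1 - s * Complex.I)
      (a := 0) (b := y) (fun s _ => hderiv s)
      (Continuous.intervalIntegrable (by continuity) 0 y)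
    have hval : Complex.exp ((y : ℂ) * Complex.I) - 1 - y * Complex.I
        = ∫ s in (0:ℝ)..y, (Complex.exp (s * Complex.I) - 1) * Complex.I := by
      rw [hFTC]; simp
    rw [hval]
    calc ‖∫ s in (0:ℝ)..y, (Complex.exp (s * Complex.I) - 1) * Complex.I‖
        ≤ ∫ s in (0:ℝ)..y, ‖(Complex.exp (s * Complex.I) - 1) * Complex.I‖ :=
          intervalIntegral.norm_integral_le_integral_norm hy
      _ ≤ ∫ s in (0:ℝ)..y, s := by
          apply intervalIntegral.integral_mono_on hy
          · exact Continuous.intervalIntegrable (by continuity) 0 y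
          · exact Continuous.intervalIntegrable continuous_id 0 y
          · intro s hs
            have := aux_norm_exp_sub_one s
            rw [norm_mul, Complex.norm_I, mul_one]
            calc ‖Complex.exp (s * Complex.I) - 1‖ ≤ |s| := this
              _ = s := abs_of_nonneg hs.1
      _ = y ^ 2 / 2 := by rw [integral_id]; ring
  rcases le_or_gt 0 x with hx | hx
  · exact key x hx
  · have hy : (0:ℝ) ≤ -x := by linarith
    have h1 := key (-x) hy
    have hconj : Complex.exp ((x:ℂ) * Complex.I) - 1 - x * Complex.I
        = (starRingEnd ℂ) (Complex.exp (((-x : ℝ):ℂ) * Complex.I) - 1 - ((-x : ℝ):ℂ) * Complex.I) := by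
      simp only [map_sub, map_mul, map_one, ← Complex.exp_conj, Complex.conj_I,
        Complex.conj_ofReal]
      push_cast
      ring_nf
    rw [hconj, RCLike.norm_conj]
    calc _ ≤ (-x) ^ 2 / 2 := h1
      _ = x ^ 2 / 2 := by ring

lemma interval_bound (a b c t : ℝ) (g : ℝ → ℝ)
    (hg : IntegrableOn g (Set.Ioc a b))
    (hsq : IntegrableOn (fun u => (c - g u) ^ 2) (Set.Ioc a b))
    (hzero : ∫ u in Set.Ioc a b, (g u - c) = 0) :
    ‖∫ u in Set.Ioc a b, (Complex.exp (Complex.I * t * c) - Complex.exp (Complex.I * t * g u))‖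
      ≤ ∫ u in Set.Ioc a b, t ^ 2 / 2 * (c - g u) ^ 2 := by
  set μ := volume.restrict (Set.Ioc a b) with hμ
  haveI : IsFiniteMeasure μ := by
    constructor
    rw [hμ, Measure.restrict_apply_univ, Real.volume_Ioc]
    exact ENNReal.ofReal_lt_top
  set h : ℝ → ℂ := fun u =>
    Complex.exp ((t * (g u - c) : ℝ) * Complex.I) - 1 - (t * (g u - c) : ℝ) * Complex.I with hh
  -- measurability
  have hgm : AEStronglyMeasurable g μ := hg.aestronglyMeasurable
  have hlm : AEStronglyMeasurable (fun u => ((t * (g u - c) : ℝ) : ℂ) * Complex.I) μ := by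
    apply AEStronglyMeasurable.mul_const
    exact (Complex.continuous_ofReal.comp_aestronglyMeasurable
      ((hgm.sub aestronglyMeasurable_const).const_mul t))
  have hexpm : AEStronglyMeasurable (fun u => Complex.exp ((t * (g u - c) : ℝ) * Complex.I)) μ :=
    Complex.continuous_exp.comp_aestronglyMeasurable hlm
  have hexp_int : Integrable (fun u => Complex.exp ((t * (g u - c) : ℝ) * Complex.I)) μ := by
    apply Integrable.mono' (integrable_const 1) hexpm
    filter_upwards with u
    rw [Complex.norm_exp_ofReal_mul_I]
  have hl_int : Integrable (fun u => ((t * (g u - c) : ℝ) : ℂ) * Complex.I) μ := by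
    apply Integrable.mul_const
    exact (Integrable.ofReal (((hg.sub (integrableOn_const
      (by rw [Real.volume_Ioc]; exact ENNReal.ofReal_ne_top))).const_mul t)))
  have hh_int : Integrable h μ :=
    (hexp_int.sub (integrable_const 1)).sub hl_int
  -- identity
  have hid : ∀ u, Complex.exp (Complex.I * t * c) - Complex.exp (Complex.I * t * (g u))
      = -Complex.exp (Complex.I * t * c) * (h u + ((t * (g u - c) : ℝ)) * Complex.I) := by
    intro u
    have he : Complex.exp (Complex.I * t * (g u))
        = Complex.exp (Complex.I * t * c) * Complex.exp (((t * (g u - c) : ℝ)) * Complex.I) := by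
      rw [← Complex.exp_add]
      congr 1
      push_cast
      ring
    rw [hh]
    simp only [he]
    ring
  have hint_eq : ∫ u, (Complex.exp (Complex.I * t * c) - Complex.exp (Complex.I * t * (g u))) ∂μ
      = -Complex.exp (Complex.I * t * c) * ∫ u, h u ∂μ := by
    simp only [hid]
    rw [integral_const_mul, integral_add hh_int hl_int]
    have : ∫ u, ((t * (g u - c) : ℝ) : ℂ) * Complex.I ∂μ = 0 := by
      have h1 : ∀ u, ((t * (g u - c) : ℝ) : ℂ) * Complex.I = (t * (g u - c)) • Complex.I := by
        intro u; rw [Complex.real_smul]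
      simp only [h1]
      rw [integral_smul_const]
      have h2 : ∫ u, t * (g u - c) ∂μ = 0 := by
        rw [integral_const_mul, hzero, mul_zero]
      rw [h2, zero_smul]
    rw [this, add_zero]
  rw [hint_eq, norm_mul, norm_neg]
  have habs : ‖Complex.exp (Complex.I * t * c)‖ = 1 := by
    have : Complex.I * t * c = ((t * c : ℝ) : ℂ) * Complex.I := by push_cast; ring
    rw [this, Complex.norm_exp_ofReal_mul_I]
  rw [habs, one_mul]
  calc ‖∫ u, h u ∂μ‖ ≤ ∫ u, ‖h u‖ ∂μ := norm_integral_le_integral_norm h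
    _ ≤ ∫ u, t ^ 2 / 2 * (c - g u) ^ 2 ∂μ := by
        apply integral_mono hh_int.norm (hsq.const_mul (t ^ 2 / 2))
        intro u
        have := aux_exp_taylor (t * (g u - c))
        calc ‖h u‖ ≤ (t * (g u - c)) ^ 2 / 2 := this
          _ = t ^ 2 / 2 * (c - g u) ^ 2 := by ring

theorem oscillation_integral_bound
    (m : ℕ) (hm : 0 < m) (f g : ℝ → ℝ)
    (hf : IntegrableOn f (Set.Ioc (0 : ℝ) 1))
    (hg : IntegrableOn g (Set.Ioc (0 : ℝ) 1))
    (hsq : IntegrableOn (fun u => (f u - g u) ^ 2) (Set.Ioc (0 : ℝ) 1))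
    (hconst : ∀ j < m, ∀ u ∈ Set.Ioc ((j : ℝ) / m) (((j : ℝ) + 1) / m),
      ∀ v ∈ Set.Ioc ((j : ℝ) / m) (((j : ℝ) + 1) / m), f u = f v)
    (hint : ∀ j < m,
      ∫ u in Set.Ioc ((j : ℝ) / m) (((j : ℝ) + 1) / m), f u =
        ∫ u in Set.Ioc ((j : ℝ) / m) (((j : ℝ) + 1) / m), g u)
    (t : ℝ) :
    ‖∫ u in Set.Ioc (0 : ℝ) 1,
        (Complex.exp (Complex.I * t * f u) - Complex.exp (Complex.I * t * g u))‖ ≤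
      t ^ 2 / 2 * ∫ u in Set.Ioc (0 : ℝ) 1, (f u - g u) ^ 2 := by
  have hm' : (0 : ℝ) < m := Nat.cast_pos.mpr hm
  set S : ℕ → Set ℝ := fun j => Set.Ioc ((j : ℝ) / m) (((j : ℝ) + 1) / m) with hS
  have hmeasS : ∀ j, MeasurableSet (S j) := fun j => measurableSet_Ioc
  -- union
  have hunion : ⋃ j ∈ Finset.range m, S j = Set.Ioc (0 : ℝ) 1 := by
    ext x
    simp only [hS, Set.mem_iUnion, Finset.mem_range, Set.mem_Ioc, exists_prop]
    constructor
    · rintro ⟨j, hj, h1, h2⟩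
      refine ⟨lt_of_le_of_lt (by positivity) h1, h2.trans ?_⟩
      rw [div_le_one hm']
      have : (j : ℝ) + 1 ≤ m := by
        have : j + 1 ≤ m := hj
        exact_mod_cast this
      linarith
    · rintro ⟨hx0, hx1⟩
      set k := ⌈x * m⌉₊ with hk
      have hxm : 0 < x * m := by positivity
      have hk1 : 1 ≤ k := Nat.one_le_ceil_iff.mpr hxm
      have hk2 : k ≤ m := Nat.ceil_le.mpr (by nlinarith)
      refine ⟨k - 1, by omega, ?_, ?_⟩
      · rw [div_lt_iff₀ hm']
        have : ((k - 1 : ℕ) : ℝ) < x * m := Nat.lt_ceil.mp (by omega)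
        linarith
      · rw [le_div_iff₀ hm']
        have h1 : x * m ≤ k := Nat.le_ceil _
        have h2 : ((k - 1 : ℕ) : ℝ) + 1 = k := by
          have : (k - 1) + 1 = k := by omega
          exact_mod_cast this
        linarith
  -- disjointness
  have hdisj : Set.Pairwise ↑(Finset.range m) (Function.onFun Disjoint S) := by
    have key : ∀ i j : ℕ, i < j → Disjoint (S i) (S j) := by
      intro i j hij
      apply Set.Ioc_disjoint_Ioc.mpr
      have h1 : (i : ℝ) + 1 ≤ j := by exact_mod_cast hij
      calc min (((i : ℝ) + 1) / m) (((j : ℝ) + 1) / m) ≤ ((i : ℝ) + 1) / m := min_le_left _ _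
        _ ≤ (j : ℝ) / m := by gcongr
        _ ≤ max ((i : ℝ) / m) ((j : ℝ) / m) := le_max_right _ _
    intro i _ j _ hij
    rcases hij.lt_or_gt with h | h
    · exact key i j h
    · exact (key j i h).symm
  have hsub : ∀ j ∈ Finset.range m, S j ⊆ Set.Ioc (0 : ℝ) 1 := by
    intro j hj
    rw [← hunion]
    exact Set.subset_biUnion_of_mem hj
  -- integrability of the complex integrand
  have hexp_int : ∀ h : ℝ → ℝ, IntegrableOn h (Set.Ioc (0 : ℝ) 1) →
      IntegrableOn (fun u => Complex.exp (Complex.I * t * h u)) (Set.Ioc (0 : ℝ) 1) := by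
    intro h hh
    have hmeas : AEStronglyMeasurable (fun u => Complex.exp (Complex.I * t * h u))
        (volume.restrict (Set.Ioc (0 : ℝ) 1)) := by
      apply Complex.continuous_exp.comp_aestronglyMeasurable
      have : AEStronglyMeasurable (fun u => ((h u : ℂ))) (volume.restrict (Set.Ioc (0:ℝ) 1)) :=
        Complex.continuous_ofReal.comp_aestronglyMeasurable hh.aestronglyMeasurable
      exact (aestronglyMeasurable_const.mul aestronglyMeasurable_const).mul this
    apply Integrable.mono' (integrable_const 1) hmeas
    filter_upwards with u
    have : Complex.I * t * h u = ((t * h u : ℝ) : ℂ) * Complex.I := by push_cast; ring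
    rw [this, Complex.norm_exp_ofReal_mul_I]
  have hΦint : IntegrableOn (fun u =>
      Complex.exp (Complex.I * t * f u) - Complex.exp (Complex.I * t * g u))
      (Set.Ioc (0 : ℝ) 1) := (hexp_int f hf).sub (hexp_int g hg)
  -- decompose both integrals
  have hΦsum : ∫ u in Set.Ioc (0 : ℝ) 1,
      (Complex.exp (Complex.I * t * f u) - Complex.exp (Complex.I * t * g u))
      = ∑ j ∈ Finset.range m, ∫ u in S j,
        (Complex.exp (Complex.I * t * f u) - Complex.exp (Complex.I * t * g u)) := by
    rw [← hunion]
    exact integral_biUnion_finset _ (fun i _ => hmeasS i) hdisj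
      (fun i hi => hΦint.mono_set (hunion ▸ Set.subset_biUnion_of_mem hi))
  have hjb : ∀ j ∈ Finset.range m,
      ‖∫ u in S j, (Complex.exp (Complex.I * t * f u) - Complex.exp (Complex.I * t * g u))‖
        ≤ ∫ u in S j, t ^ 2 / 2 * (f u - g u) ^ 2 := by
    intro j hj
    have hjm : j < m := Finset.mem_range.mp hj
    have hmem : ((j : ℝ) + 1) / m ∈ S j := by
      refine ⟨?_, le_refl _⟩
      gcongr
      linarith
    set c := f (((j : ℝ) + 1) / m) with hc
    have hfc : ∀ u ∈ S j, f u = c := fun u hu => hconst j hjm u hu _ hmem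
    have hgj : IntegrableOn g (S j) := hg.mono_set (hsub j hj)
    have hsqj : IntegrableOn (fun u => (c - g u) ^ 2) (S j) := by
      apply ((hsq.mono_set (hsub j hj)).congr_fun ?_ (hmeasS j))
      intro u hu
      simp only
      rw [hfc u hu]
    have hconstj : IntegrableOn (fun _ : ℝ => c) (S j) := by
      refine integrableOn_const ?_
      rw [Real.volume_Ioc]
      exact ENNReal.ofReal_ne_top
    have hzero : ∫ u in S j, (g u - c) = 0 := by
      rw [integral_sub hgj hconstj]
      have h1 : ∫ u in S j, (fun _ => c) u = ∫ u in S j, f u :=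
        setIntegral_congr_fun (hmeasS j) (fun u hu => (hfc u hu).symm)
      simp only at h1
      rw [h1, ← hint j hjm, sub_self]
    have hcong : ∫ u in S j, (Complex.exp (Complex.I * t * f u) - Complex.exp (Complex.I * t * g u))
        = ∫ u in S j, (Complex.exp (Complex.I * t * c) - Complex.exp (Complex.I * t * g u)) :=
      setIntegral_congr_fun (hmeasS j) (fun u hu => by rw [hfc u hu])
    rw [hcong]
    calc ‖∫ u in S j, (Complex.exp (Complex.I * t * c) - Complex.exp (Complex.I * t * g u))‖
        ≤ ∫ u in S j, t ^ 2 / 2 * (c - g u) ^ 2 := interval_bound _ _ c t g hgj hsqj hzero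
      _ = ∫ u in S j, t ^ 2 / 2 * (f u - g u) ^ 2 :=
          setIntegral_congr_fun (hmeasS j) (fun u hu => by rw [hfc u hu])
  have hsqint : IntegrableOn (fun u => t ^ 2 / 2 * (f u - g u) ^ 2) (Set.Ioc (0 : ℝ) 1) :=
    hsq.const_mul _
  have hsqsum : ∑ j ∈ Finset.range m, ∫ u in S j, t ^ 2 / 2 * (f u - g u) ^ 2
      = ∫ u in Set.Ioc (0 : ℝ) 1, t ^ 2 / 2 * (f u - g u) ^ 2 := by
    rw [← hunion]
    exact (integral_biUnion_finset _ (fun i _ => hmeasS i) hdisj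
      (fun i hi => hsqint.mono_set (hunion ▸ Set.subset_biUnion_of_mem hi))).symm
  rw [hΦsum]
  calc ‖∑ j ∈ Finset.range m, ∫ u in S j,
        (Complex.exp (Complex.I * t * f u) - Complex.exp (Complex.I * t * g u))‖
      ≤ ∑ j ∈ Finset.range m, ‖∫ u in S j,
        (Complex.exp (Complex.I * t * f u) - Complex.exp (Complex.I * t * g u))‖ :=
        norm_sum_le _ _
    _ ≤ ∑ j ∈ Finset.range m, ∫ u in S j, t ^ 2 / 2 * (f u - g u) ^ 2 :=
        Finset.sum_le_sum hjb
    _ = ∫ u in Set.Ioc (0 : ℝ) 1, t ^ 2 / 2 * (f u - g u) ^ 2 := hsqsum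
    _ = t ^ 2 / 2 * ∫ u in Set.Ioc (0 : ℝ) 1, (f u - g u) ^ 2 := integral_const_mul _ _
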